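/- The tilde map Ψ(U) = Jₙ' Uᵀ (Jₙ')⁻¹ is an antihomomorphism in the sense Ψ(G₁G₂) = Ψ(G₂)Ψ(G₁), and for any local unitaries V, W (tensor products of SU(2) matrices) and arbitrary U ∈ SU(2ⁿ), one has V·U·W·Ψ(V·U·W) = V·U·Ψ(U)·V⁻¹. Consequently the spectrum of U·Ψ(U) is invariant under left and right multiplication of U by local unitaries. -/
import Mathlib


open Matrix Kronecker Complex

/-- The `n`-fold Kronecker (tensor) product of 2×2 matrices, in the basis of
`ℂ^{2ⁿ}` indexed by `Fin n → Fin 2`. -/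
noncomputable def tpow (n : ℕ) (G : Fin n → Matrix (Fin 2) (Fin 2) ℂ) :
    Matrix (Fin n → Fin 2) (Fin n → Fin 2) ℂ :=
  Matrix.of fun x y => ∏ j, G j (x j) (y j)

/-- `Jₙ' = (iσ_y)^{⊗n}` where `iσ_y = [[0,1],[-1,0]]`. -/
noncomputable def Jn (n : ℕ) : Matrix (Fin n → Fin 2) (Fin n → Fin 2) ℂ :=
  tpow n fun _ => !![0, 1; -1, 0]

/-- The tilde map `Ψ(U) = Jₙ' Uᵀ (Jₙ')⁻¹`. -/
noncomputable def tilde (n : ℕ) (U : Matrix (Fin n → Fin 2) (Fin n → Fin 2) ℂ) :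
    Matrix (Fin n → Fin 2) (Fin n → Fin 2) ℂ :=
  Jn n * Uᵀ * (Jn n)⁻¹

lemma tpow_mul (n : ℕ) (A B : Fin n → Matrix (Fin 2) (Fin 2) ℂ) :
    tpow n A * tpow n B = tpow n (fun j => A j * B j) := by
  ext x y
  simp only [tpow, Matrix.mul_apply, Matrix.of_apply]
  rw [Finset.prod_univ_sum, Fintype.piFinset_univ]
  exact Finset.sum_congr rfl fun z _ => Finset.prod_mul_distrib.symm

lemma tpow_one (n : ℕ) : tpow n (fun _ => (1 : Matrix (Fin 2) (Fin 2) ℂ)) = 1 := by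
  ext x y
  simp only [tpow, Matrix.of_apply, Matrix.one_apply]
  by_cases h : x = y
  · simp [h]
  · obtain ⟨j, hj⟩ := Function.ne_iff.mp h
    rw [if_neg h]
    exact Finset.prod_eq_zero (Finset.mem_univ j) (by simp [Matrix.one_apply, hj])

lemma tpow_transpose (n : ℕ) (A : Fin n → Matrix (Fin 2) (Fin 2) ℂ) :
    (tpow n A)ᵀ = tpow n (fun j => (A j)ᵀ) := by
  ext x y; simp [tpow, Matrix.transpose_apply]

lemma JJ' : (!![0,1;-1,0] : Matrix (Fin 2) (Fin 2) ℂ) * !![0,-1;1,0] = 1 := by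
  rw [Matrix.one_fin_two]; norm_num [Matrix.mul_fin_two]

lemma J'J : (!![0,-1;1,0] : Matrix (Fin 2) (Fin 2) ℂ) * !![0,1;-1,0] = 1 := by
  rw [Matrix.one_fin_two]; norm_num [Matrix.mul_fin_two]

lemma Jn_inv (n : ℕ) : (Jn n)⁻¹ = tpow n (fun _ => !![0,-1;1,0]) := by
  apply Matrix.inv_eq_right_inv
  rw [Jn, tpow_mul]
  simp only [JJ']
  exact tpow_one n

lemma Jn_mul_inv (n : ℕ) : Jn n * (Jn n)⁻¹ = 1 := by
  rw [Jn_inv, Jn, tpow_mul]; simp only [JJ']; exact tpow_one n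

lemma Jn_inv_mul (n : ℕ) : (Jn n)⁻¹ * Jn n = 1 := by
  rw [Jn_inv, Jn, tpow_mul]; simp only [J'J]; exact tpow_one n

lemma tilde_mul (n : ℕ) (G₁ G₂ : Matrix (Fin n → Fin 2) (Fin n → Fin 2) ℂ) :
    tilde n (G₁ * G₂) = tilde n G₂ * tilde n G₁ := by
  unfold tilde
  rw [Matrix.transpose_mul]
  calc Jn n * (G₂ᵀ * G₁ᵀ) * (Jn n)⁻¹
      = Jn n * G₂ᵀ * ((Jn n)⁻¹ * Jn n) * G₁ᵀ * (Jn n)⁻¹ := by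
        rw [Jn_inv_mul]; noncomm_ring
    _ = Jn n * G₂ᵀ * (Jn n)⁻¹ * (Jn n * G₁ᵀ * (Jn n)⁻¹) := by noncomm_ring

lemma su2_aux (a b c d : ℂ) (h : a*d - b*c = 1) :
    !![a,b;c,d] * (!![0,1;-1,0] * (!![a,b;c,d] : Matrix (Fin 2) (Fin 2) ℂ)ᵀ * !![0,-1;1,0]) = 1 := by
  have ht : (!![a,b;c,d] : Matrix (Fin 2) (Fin 2) ℂ)ᵀ = !![a,c;b,d] := by
    ext i j; fin_cases i <;> fin_cases j <;> simp
  rw [ht]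
  simp only [Matrix.mul_fin_two, Matrix.one_fin_two]
  ext i j
  fin_cases i <;> fin_cases j <;> simp <;> first | linear_combination h | ring

lemma su2_conj (G : Matrix (Fin 2) (Fin 2) ℂ) (h : G.det = 1) :
    !![0,1;-1,0] * Gᵀ * !![0,-1;1,0] = G⁻¹ := by
  rw [Matrix.det_fin_two] at h
  symm
  apply Matrix.inv_eq_right_inv
  rw [Matrix.eta_fin_two G]
  exact su2_aux _ _ _ _ h

lemma tilde_tpow (n : ℕ) (A : Fin n → Matrix (Fin 2) (Fin 2) ℂ)
    (h : ∀ j, (A j).det = 1) :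
    tilde n (tpow n A) = tpow n (fun j => (A j)⁻¹) := by
  rw [tilde, Jn_inv, tpow_transpose, Jn, tpow_mul, tpow_mul]
  exact congrArg (tpow n) (funext fun j => su2_conj _ (h j))

lemma tpow_mul_inv (n : ℕ) (A : Fin n → Matrix (Fin 2) (Fin 2) ℂ)
    (h : ∀ j, (A j).det = 1) :
    tpow n A * tpow n (fun j => (A j)⁻¹) = 1 := by
  rw [tpow_mul]
  have : (fun j => A j * (A j)⁻¹) = fun _ : Fin n => (1 : Matrix (Fin 2) (Fin 2) ℂ) := by
    funext j
    exact Matrix.mul_nonsing_inv _ (by simp [h j])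
  rw [this, tpow_one]

lemma tpow_inv_mul (n : ℕ) (A : Fin n → Matrix (Fin 2) (Fin 2) ℂ)
    (h : ∀ j, (A j).det = 1) :
    tpow n (fun j => (A j)⁻¹) * tpow n A = 1 := by
  rw [tpow_mul]
  have : (fun j => (A j)⁻¹ * A j) = fun _ : Fin n => (1 : Matrix (Fin 2) (Fin 2) ℂ) := by
    funext j
    exact Matrix.nonsing_inv_mul _ (by simp [h j])
  rw [this, tpow_one]

lemma tpow_inv (n : ℕ) (A : Fin n → Matrix (Fin 2) (Fin 2) ℂ)
    (h : ∀ j, (A j).det = 1) :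
    (tpow n A)⁻¹ = tpow n (fun j => (A j)⁻¹) :=
  Matrix.inv_eq_right_inv (tpow_mul_inv n A h)

/-- `Ψ` is an antihomomorphism; for local unitaries `V, W` one has
`V·U·W·Ψ(V·U·W) = V·U·Ψ(U)·V⁻¹`, and hence the spectrum of `U·Ψ(U)` is invariant
under left and right multiplication of `U` by local unitaries. -/
theorem stmt5 (n : ℕ) :
    (∀ G₁ G₂ : Matrix (Fin n → Fin 2) (Fin n → Fin 2) ℂ,
      tilde n (G₁ * G₂) = tilde n G₂ * tilde n G₁) ∧
    (∀ (Gs Hs : Fin n → Matrix (Fin 2) (Fin 2) ℂ),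
      (∀ j, Gs j ∈ Matrix.specialUnitaryGroup (Fin 2) ℂ) →
      (∀ j, Hs j ∈ Matrix.specialUnitaryGroup (Fin 2) ℂ) →
      ∀ U ∈ Matrix.specialUnitaryGroup (Fin n → Fin 2) ℂ,
        (tpow n Gs * U * tpow n Hs * tilde n (tpow n Gs * U * tpow n Hs) =
          tpow n Gs * U * tilde n U * (tpow n Gs)⁻¹) ∧
        spectrum ℂ (tpow n Gs * U * tpow n Hs * tilde n (tpow n Gs * U * tpow n Hs)) =
          spectrum ℂ (U * tilde n U)) := by
  refine ⟨tilde_mul n, fun Gs Hs hGs hHs U _ => ?_⟩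
  have hdG : ∀ j, (Gs j).det = 1 := fun j => ((Matrix.mem_specialUnitaryGroup_iff).mp (hGs j)).2
  have hdH : ∀ j, (Hs j).det = 1 := fun j => ((Matrix.mem_specialUnitaryGroup_iff).mp (hHs j)).2
  have key : tpow n Gs * U * tpow n Hs * tilde n (tpow n Gs * U * tpow n Hs) =
      tpow n Gs * U * tilde n U * (tpow n Gs)⁻¹ := by
    rw [tilde_mul, tilde_mul, tilde_tpow n Hs hdH, tilde_tpow n Gs hdG, tpow_inv n Gs hdG]
    calc tpow n Gs * U * tpow n Hs *
          (tpow n (fun j => (Hs j)⁻¹) * (tilde n U * tpow n (fun j => (Gs j)⁻¹)))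
        = tpow n Gs * U * (tpow n Hs * tpow n (fun j => (Hs j)⁻¹)) *
            tilde n U * tpow n (fun j => (Gs j)⁻¹) := by noncomm_ring
      _ = tpow n Gs * U * tilde n U * tpow n (fun j => (Gs j)⁻¹) := by
            rw [tpow_mul_inv n Hs hdH]; noncomm_ring
  refine ⟨key, ?_⟩
  rw [key]
  let u : (Matrix (Fin n → Fin 2) (Fin n → Fin 2) ℂ)ˣ :=
    ⟨tpow n Gs, tpow n (fun j => (Gs j)⁻¹), tpow_mul_inv n Gs hdG, tpow_inv_mul n Gs hdG⟩
  have hu : (u : Matrix (Fin n → Fin 2) (Fin n → Fin 2) ℂ) = tpow n Gs := rfl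
  have hu' : ((u⁻¹ : _ˣ) : Matrix (Fin n → Fin 2) (Fin n → Fin 2) ℂ) = (tpow n Gs)⁻¹ := by
    rw [tpow_inv n Gs hdG]; rfl
  rw [← hu', ← hu, Matrix.mul_assoc (u : Matrix (Fin n → Fin 2) (Fin n → Fin 2) ℂ) U (tilde n U)]
  exact spectrum.units_conjugate
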